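/- For any nonempty finite set I of nonnegative integers, there exists a closed convex set S ⊆ ℝᵈ with d = max I whose facial dimension signature is exactly I; moreover S can be chosen as the solution set of |I| − 1 convex quadratic inequalities, and if 0 ∈ I, S can be chosen compact. -/

import Mathlib

open Set Metric RealInnerProductSpace

variable {E : Type*} [NormedAddCommGroup E] [NormedSpace ℝ E]

/-- A face of a convex set: a convex subset `F` of `C` such that any open segment of `C`
meeting `F` has both endpoints in `F`. -/
def IsFace (C F : Set E) : Prop := Convex ℝ F ∧ IsExtreme ℝ C F

/-- Dimension of a convex set: the dimension of its affine hull. -/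
noncomputable def sdim (S : Set E) : ℕ := Module.finrank ℝ (affineSpan ℝ S).direction

/-- The facial dimension signature: the set of dimensions of nonempty faces. -/
def faceDimSig (C : Set E) : Set ℕ :=
  {d | ∃ F : Set E, IsFace C F ∧ F.Nonempty ∧ sdim F = d}

/-- The minimal face of `C` containing `x`. -/
def minFace (C : Set E) (x : E) : Set E := ⋂₀ {F | IsFace C F ∧ x ∈ F}

/-- `S` is the solution set of `k` convex quadratic inequalities. -/
def QuadRep {N : ℕ} (S : Set (EuclideanSpace ℝ (Fin N))) (k : ℕ) : Prop :=
  ∃ (Q : Fin k → (EuclideanSpace ℝ (Fin N) →ₗ[ℝ] EuclideanSpace ℝ (Fin N)))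
    (a : Fin k → EuclideanSpace ℝ (Fin N)) (α : Fin k → ℝ),
    (∀ j x, (0 : ℝ) ≤ ⟪Q j x, x⟫) ∧
    (∀ j x y, ⟪Q j x, y⟫ = ⟪x, Q j y⟫) ∧
    S = {x | ∀ j, ⟪Q j x, x⟫ + 2 * ⟪a j, x⟫ + α j ≤ 0}


noncomputable def pr (d t : ℕ) : EuclideanSpace ℝ (Fin d) →ₗ[ℝ] EuclideanSpace ℝ (Fin d) where
  toFun x := WithLp.toLp 2 (fun i => if t ≤ i.val then x i else 0)
  map_add' x y := by ext i; by_cases h : t ≤ i.val <;> simp [h]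
  map_smul' c x := by ext i; by_cases h : t ≤ i.val <;> simp [h]

lemma pr_apply {d t : ℕ} (x : EuclideanSpace ℝ (Fin d)) (i : Fin d) :
    pr d t x i = if t ≤ i.val then x i else 0 := rfl

lemma pr_comp {d t t' : ℕ} (x : EuclideanSpace ℝ (Fin d)) :
    pr d t (pr d t' x) = pr d (max t t') x := by
  ext i
  simp only [pr_apply, max_le_iff]
  by_cases h : t ≤ i.val <;> by_cases h' : t' ≤ i.val <;> simp [h, h']

lemma pr_zero {d : ℕ} (x : EuclideanSpace ℝ (Fin d)) : pr d 0 x = x := by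
  ext i; simp [pr_apply]

lemma pr_top {d t : ℕ} (h : d ≤ t) (x : EuclideanSpace ℝ (Fin d)) : pr d t x = 0 := by
  ext i
  have : ¬ t ≤ i.val := by have := i.isLt; omega
  simp only [pr_apply, this, if_false]
  rfl

lemma inner_pr_left {d t : ℕ} (x y : EuclideanSpace ℝ (Fin d)) :
    ⟪pr d t x, y⟫ = ⟪pr d t x, pr d t y⟫ := by
  simp only [PiLp.inner_apply, RCLike.inner_apply, conj_trivial]
  refine Finset.sum_congr rfl fun i _ => ?_
  by_cases h : t ≤ i.val <;> simp [pr_apply, h]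

lemma inner_pr_symm {d t : ℕ} (x y : EuclideanSpace ℝ (Fin d)) :
    ⟪pr d t x, y⟫ = ⟪x, pr d t y⟫ := by
  simp only [PiLp.inner_apply, RCLike.inner_apply, conj_trivial]
  refine Finset.sum_congr rfl fun i _ => ?_
  by_cases h : t ≤ i.val <;> simp [pr_apply, h]

lemma inner_pr_self {d t : ℕ} (x : EuclideanSpace ℝ (Fin d)) :
    ⟪pr d t x, x⟫ = ‖pr d t x‖ ^ 2 := by
  rw [inner_pr_left, real_inner_self_eq_norm_sq]

lemma inner_orth {d t : ℕ} {a b : EuclideanSpace ℝ (Fin d)}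
    (ha : pr d t a = 0) (hb : pr d t b = b) : ⟪a, b⟫ = 0 := by
  have : ⟪a, b⟫ = ⟪pr d t a, b⟫ := by
    rw [inner_pr_symm]
    congr 1
    conv_lhs => rw [← hb]
  rw [this, ha, inner_zero_left]

lemma pyth {d t : ℕ} {a b : EuclideanSpace ℝ (Fin d)}
    (ha : pr d t a = 0) (hb : pr d t b = b) : ‖a + b‖ ^ 2 = ‖a‖ ^ 2 + ‖b‖ ^ 2 := by
  rw [norm_add_sq_real, inner_orth ha hb]; ring

lemma norm_pr_le {d t : ℕ} (x : EuclideanSpace ℝ (Fin d)) : ‖pr d t x‖ ≤ ‖x‖ := by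
  have h1 : ‖pr d t x‖ ^ 2 = ⟪pr d t x, x⟫ := (inner_pr_self x).symm
  have h2 := real_inner_le_norm (pr d t x) x
  nlinarith [norm_nonneg (pr d t x), norm_nonneg x]

lemma pr_single {d t : ℕ} (i : Fin d) (c : ℝ) :
    pr d t (EuclideanSpace.single i c) = if t ≤ i.val then EuclideanSpace.single i c else 0 := by
  ext j
  by_cases h : t ≤ i.val <;> by_cases hj : t ≤ j.val <;>
    simp only [pr_apply, hj, h, EuclideanSpace.single_apply, if_true, if_false,
      PiLp.zero_apply] <;>
    (try rfl) <;> rw [if_neg (by rintro rfl; omega)]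

-- strict convexity lemma
lemma L1 {F : Type*} [NormedAddCommGroup F] [InnerProductSpace ℝ F]
    {a b : F} {t s r : ℝ} (ht : 0 < t) (hs : 0 < s) (hts : t + s = 1)
    (ha : ‖a‖ ^ 2 ≤ r) (hb : ‖b‖ ^ 2 ≤ r) (h : r ≤ ‖t • a + s • b‖ ^ 2) : a = b := by
  have hs1 : s = 1 - t := by linarith
  subst hs1
  have key : ‖t • a + (1 - t) • b‖ ^ 2
      = t * ‖a‖ ^ 2 + (1 - t) * ‖b‖ ^ 2 - t * (1 - t) * ‖a - b‖ ^ 2 := by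
    rw [norm_add_sq_real, norm_sub_sq_real, norm_smul, norm_smul, real_inner_smul_left,
      real_inner_smul_right]
    simp only [Real.norm_eq_abs, abs_of_pos ht, abs_of_pos hs]
    ring
  have h2 : ‖a - b‖ ^ 2 ≤ 0 := by nlinarith [mul_nonneg ht.le (sub_nonneg.2 ha), mul_nonneg hs.le (sub_nonneg.2 hb), mul_pos ht hs]
  have h3 : ‖a - b‖ = 0 := by nlinarith [norm_nonneg (a - b), sq_nonneg ‖a - b‖]
  have := norm_eq_zero.mp h3
  exact sub_eq_zero.mp this

lemma L2 {F : Type*} [NormedAddCommGroup F] [InnerProductSpace ℝ F]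
    {a b : F} {t s : ℝ} (ht : 0 ≤ t) (hs : 0 ≤ s) (hts : t + s = 1) :
    ‖t • a + s • b‖ ^ 2 ≤ t * ‖a‖ ^ 2 + s * ‖b‖ ^ 2 := by
  have hs1 : s = 1 - t := by linarith
  subst hs1
  have key : ‖t • a + (1 - t) • b‖ ^ 2
      = t * ‖a‖ ^ 2 + (1 - t) * ‖b‖ ^ 2 - t * (1 - t) * ‖a - b‖ ^ 2 := by
    rw [norm_add_sq_real, norm_sub_sq_real, norm_smul, norm_smul, real_inner_smul_left,
      real_inner_smul_right]
    simp only [Real.norm_eq_abs, abs_of_nonneg ht, abs_of_nonneg hs]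
    ring
  nlinarith [mul_nonneg (mul_nonneg ht hs) (sq_nonneg ‖a - b‖)]

noncomputable section
variable {d : ℕ} (n : ℕ → ℕ)

/-- The basic family of sets. -/
def TT (d : ℕ) (n : ℕ → ℕ) (m : ℕ) (v : EuclideanSpace ℝ (Fin d)) : Set (EuclideanSpace ℝ (Fin d)) :=
  {x | pr d (n m) x = v ∧ ∀ j < m, ‖pr d (n j) x - v‖ ^ 2 ≤ (m : ℝ) - j}

lemma convex_TT (m : ℕ) (v : EuclideanSpace ℝ (Fin d)) : Convex ℝ (TT d n m v) := by
  intro x hx y hy t s ht hs hts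
  constructor
  · rw [map_add, map_smul, map_smul, hx.1, hy.1, ← add_smul, hts, one_smul]
  · intro j hj
    have : pr d (n j) (t • x + s • y) - v
        = t • (pr d (n j) x - v) + s • (pr d (n j) y - v) := by
      rw [map_add, map_smul, map_smul]
      match_scalars <;> linarith
    rw [this]
    calc ‖t • (pr d (n j) x - v) + s • (pr d (n j) y - v)‖ ^ 2
        ≤ t * ‖pr d (n j) x - v‖ ^ 2 + s * ‖pr d (n j) y - v‖ ^ 2 := L2 ht hs hts
      _ ≤ t * ((m:ℝ) - j) + s * ((m:ℝ) - j) := by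
          gcongr <;> [exact hx.2 j hj; exact hy.2 j hj]
      _ = (m:ℝ) - j := by rw [← add_mul, hts, one_mul]

lemma isClosed_TT (m : ℕ) (v : EuclideanSpace ℝ (Fin d)) : IsClosed (TT d n m v) := by
  have h1 : IsClosed {x : EuclideanSpace ℝ (Fin d) | pr d (n m) x = v} :=
    isClosed_eq (LinearMap.continuous_of_finiteDimensional _) continuous_const
  have h2 : ∀ j : ℕ, IsClosed {x : EuclideanSpace ℝ (Fin d) | ‖pr d (n j) x - v‖ ^ 2 ≤ (m : ℝ) - j} := by
    intro j
    apply isClosed_le _ continuous_const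
    exact (((LinearMap.continuous_of_finiteDimensional _).sub continuous_const).norm).pow 2
  have : TT d n m v = {x | pr d (n m) x = v} ∩ ⋂ j ∈ Finset.range m, {x : EuclideanSpace ℝ (Fin d) | ‖pr d (n j) x - v‖ ^ 2 ≤ (m : ℝ) - j} := by
    ext x
    simp only [TT, mem_setOf_eq, mem_inter_iff, mem_iInter, Finset.mem_range]
  rw [this]
  exact h1.inter (isClosed_biInter fun j _ => h2 j)

def KEquiv (d t : ℕ) : (LinearMap.ker (pr d t)) ≃ₗ[ℝ] (Fin (min t d) → ℝ) where
  toFun x i := (x : EuclideanSpace ℝ (Fin d)) ⟨i.val, lt_of_lt_of_le i.isLt (min_le_right t d)⟩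
  map_add' x y := rfl
  map_smul' c x := rfl
  invFun y := ⟨WithLp.toLp 2 (fun i : Fin d => if h : i.val < min t d then y ⟨i.val, h⟩ else 0), by
    have : ∀ i : Fin d, t ≤ i.val → ¬ (i.val < min t d) := fun i hi => by omega
    refine LinearMap.mem_ker.2 ?_
    ext i
    by_cases h : t ≤ i.val
    · simp only [pr_apply, h, if_true, this i h, dif_neg]
      rfl
    · simp only [pr_apply, h, if_false]
      rfl⟩
  left_inv x := by
    apply Subtype.ext
    ext i
    by_cases h : i.val < min t d
    · simp only [dif_pos h]
    · have ht : t ≤ i.val := by have := i.isLt; omega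
      have hx := LinearMap.mem_ker.1 x.2
      have : (x : EuclideanSpace ℝ (Fin d)) i = 0 := by
        have := congrArg (fun z : EuclideanSpace ℝ (Fin d) => z i) hx
        rw [pr_apply, if_pos ht] at this
        exact this
      simp only [dif_neg h, this]
  right_inv y := by
    funext i
    simp only [i.isLt, dif_pos]

lemma Kfinrank (d t : ℕ) : Module.finrank ℝ (LinearMap.ker (pr d t)) = min t d := by
  rw [(KEquiv d t).finrank_eq, Module.finrank_fin_fun]

lemma pr_eq_self_of_le {d t t' : ℕ} (h : t ≤ t') {v : EuclideanSpace ℝ (Fin d)}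
    (hv : pr d t' v = v) : pr d t v = v := by
  conv_lhs => rw [← hv]
  rw [pr_comp, max_eq_right h, hv]

lemma mem_TT_of (hmono : Monotone n) {m : ℕ} {v w : EuclideanSpace ℝ (Fin d)}
    (hv : pr d (n m) v = v) (hw : pr d (n m) w = 0) (hw1 : ‖w‖ ≤ 1) :
    v + w ∈ TT d n m v := by
  constructor
  · rw [map_add, hv, hw, add_zero]
  · intro j hj
    have hvj : pr d (n j) v = v := pr_eq_self_of_le (hmono hj.le) hv
    have : pr d (n j) (v + w) - v = pr d (n j) w := by
      rw [map_add, hvj]; abel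
    rw [this]
    have h1 : ‖pr d (n j) w‖ ≤ 1 := le_trans (norm_pr_le w) hw1
    have h2 : (1 : ℝ) ≤ (m : ℝ) - j := by
      have : (j : ℝ) + 1 ≤ m := by exact_mod_cast hj
      linarith
    nlinarith [norm_nonneg (pr d (n j) w)]

lemma sdim_TT (hmono : Monotone n) {m : ℕ} (hd : n m ≤ d) {v : EuclideanSpace ℝ (Fin d)}
    (hv : pr d (n m) v = v) : sdim (TT d n m v) = n m := by
  set K := LinearMap.ker (pr d (n m)) with hKdef
  have hK : Module.finrank ℝ K = n m := by rw [Kfinrank]; omega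
  set A : AffineSubspace ℝ (EuclideanSpace ℝ (Fin d)) := AffineSubspace.mk' v K with hA
  have hTTA : TT d n m v ⊆ A := by
    intro x hx
    rw [hA]
    rw [SetLike.mem_coe, AffineSubspace.mem_mk']
    refine LinearMap.mem_ker.2 ?_
    have : (x -ᵥ v) = x - v := rfl
    rw [this, map_sub, hx.1, hv, sub_self]
  have h1 : affineSpan ℝ (TT d n m v) ≤ A := affineSpan_le.2 hTTA
  have hup : (affineSpan ℝ (TT d n m v)).direction ≤ K := by
    have := AffineSubspace.direction_le h1
    rwa [hA, AffineSubspace.direction_mk'] at this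
  have hlow : K ≤ (affineSpan ℝ (TT d n m v)).direction := by
    intro w hw
    set c : ℝ := (‖w‖ + 1)⁻¹ with hc
    have hcpos : 0 < c := by positivity
    have hcw : pr d (n m) (c • w) = 0 := by rw [map_smul, LinearMap.mem_ker.1 hw, smul_zero]
    have hcw1 : ‖c • w‖ ≤ 1 := by
      rw [norm_smul, Real.norm_eq_abs, abs_of_pos hcpos, hc]
      rw [inv_mul_le_iff₀ (by positivity), mul_one]
      linarith
    have h2 : v + c • w ∈ TT d n m v := mem_TT_of n hmono hv hcw hcw1
    have h3 : v ∈ TT d n m v := by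
      have := mem_TT_of n hmono hv (map_zero _) (by simp)
      simpa using this
    have h4 := AffineSubspace.vsub_mem_direction
      (subset_affineSpan ℝ _ h2) (subset_affineSpan ℝ _ h3)
    have h5 : (v + c • w) -ᵥ v = c • w := by
      rw [vsub_eq_sub]; abel
    rw [h5] at h4
    have := Submodule.smul_mem _ c⁻¹ h4
    rwa [smul_smul, inv_mul_cancel₀ hcpos.ne', one_smul] at this
  have : (affineSpan ℝ (TT d n m v)).direction = K := le_antisymm hup hlow
  rw [sdim, this, hK]

lemma pr_sub_comb {j : ℕ} {v x y : EuclideanSpace ℝ (Fin d)} {t s : ℝ} (hts : t + s = 1) :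
    pr d (n j) (t • x + s • y) - v
      = t • (pr d (n j) x - v) + s • (pr d (n j) y - v) := by
  rw [map_add, map_smul, map_smul]
  match_scalars <;> linarith

lemma face_classify (hmono : Monotone n) :
    ∀ m : ℕ, n m ≤ d → ∀ (v : EuclideanSpace ℝ (Fin d)) (F : Set (EuclideanSpace ℝ (Fin d))),
      pr d (n m) v = v → IsFace (TT d n m v) F → F.Nonempty → ∃ m' ≤ m, sdim F = n m' := by
  intro m
  induction m using Nat.strong_induction_on with
  | _ m IH =>
  intro hd v F hv hF hFne
  have hsub : F ⊆ TT d n m v := hF.2.1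
  by_cases hcase : ∀ j < m, ∃ x ∈ F, ‖pr d (n j) x - v‖ ^ 2 < (m : ℝ) - j
  · -- Case 1 : F = TT d n m v
    refine ⟨m, le_refl m, ?_⟩
    suffices hFT : F = TT d n m v by rw [hFT]; exact sdim_TT n hmono hd hv
    -- a point where all constraints are strict
    have key : ∀ l, l ≤ m → ∃ x ∈ F, ∀ j < l, ‖pr d (n j) x - v‖ ^ 2 < (m : ℝ) - j := by
      intro l
      induction l with
      | zero =>
        intro _
        obtain ⟨x, hx⟩ := hFne
        exact ⟨x, hx, fun j hj => absurd hj (Nat.not_lt_zero j)⟩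
      | succ l IHl =>
        intro hl
        obtain ⟨x, hxF, hx⟩ := IHl (Nat.le_of_succ_le hl)
        obtain ⟨y, hyF, hy⟩ := hcase l hl
        have hmid : (1/2 : ℝ) • x + (1/2 : ℝ) • y ∈ F :=
          hF.1 hxF hyF (by norm_num) (by norm_num) (by norm_num)
        refine ⟨(1/2 : ℝ) • x + (1/2 : ℝ) • y, hmid, ?_⟩
        intro j hj
        have heq := pr_sub_comb n (v := v) (x := x) (y := y) (j := j)
          (t := (1/2 : ℝ)) (s := (1/2 : ℝ)) (by norm_num)
        rw [heq]
        have hL2 : ‖(1/2 : ℝ) • (pr d (n j) x - v) + (1/2 : ℝ) • (pr d (n j) y - v)‖ ^ 2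
            ≤ (1/2 : ℝ) * ‖pr d (n j) x - v‖ ^ 2 + (1/2 : ℝ) * ‖pr d (n j) y - v‖ ^ 2 :=
          L2 (by norm_num) (by norm_num) (by norm_num)
        rcases Nat.lt_or_ge j l with hjl | hjl
        · have h1 := hx j hjl
          have h2 := (hsub hyF).2 j (lt_of_lt_of_le hj hl)
          linarith
        · have hjeq : j = l := by omega
          subst hjeq
          have h1 := (hsub hxF).2 j (lt_of_lt_of_le hj hl)
          linarith
    obtain ⟨x₀, hx₀F, hx₀⟩ := key m le_rfl
    apply Subset.antisymm hsub
    intro y hy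
    -- choose ε
    have hex : ∃ ε : ℝ, 0 < ε ∧ ∀ j < m,
        ‖pr d (n j) x₀ - v‖ + ε * ‖(pr d (n j) x₀ - v) - (pr d (n j) y - v)‖
          ≤ Real.sqrt ((m : ℝ) - j) := by
      rcases Nat.eq_zero_or_pos m with hm | hm
      · exact ⟨1, one_pos, fun j hj => absurd hj (by omega)⟩
      · set f : ℕ → ℝ := fun j =>
          (Real.sqrt ((m : ℝ) - j) - ‖pr d (n j) x₀ - v‖) /
            (‖(pr d (n j) x₀ - v) - (pr d (n j) y - v)‖ + 1) with hf
        have hne : (Finset.range m).Nonempty := ⟨0, Finset.mem_range.2 hm⟩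
        have hfpos : ∀ j ∈ Finset.range m, 0 < f j := by
          intro j hj
          rw [Finset.mem_range] at hj
          have h1 : ‖pr d (n j) x₀ - v‖ < Real.sqrt ((m : ℝ) - j) := by
            have hstr := hx₀ j hj
            have hsq : Real.sqrt ((m:ℝ)-j) ^ 2 = (m:ℝ) - j := Real.sq_sqrt (by
                have : (j:ℝ) + 1 ≤ m := by exact_mod_cast hj
                linarith)
            nlinarith [norm_nonneg (pr d (n j) x₀ - v), Real.sqrt_nonneg ((m:ℝ) - j)]
          apply div_pos (by linarith) (by positivity)
        refine ⟨(Finset.range m).inf' hne f, ?_, ?_⟩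
        · exact (Finset.lt_inf'_iff hne).2 hfpos
        · intro j hj
          have hjm := Finset.mem_range.2 hj
          have hle : (Finset.range m).inf' hne f ≤ f j := Finset.inf'_le f hjm
          have hpos := hfpos j hjm
          have h2 : (Finset.range m).inf' hne f *
              ‖(pr d (n j) x₀ - v) - (pr d (n j) y - v)‖
              ≤ f j * (‖(pr d (n j) x₀ - v) - (pr d (n j) y - v)‖ + 1) := by
            apply mul_le_mul hle (by linarith) (norm_nonneg _) hpos.le
          have h3 : f j * (‖(pr d (n j) x₀ - v) - (pr d (n j) y - v)‖ + 1)
              = Real.sqrt ((m : ℝ) - j) - ‖pr d (n j) x₀ - v‖ := by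
            rw [hf]
            field_simp
          linarith
    obtain ⟨ε, hε, hεp⟩ := hex
    set z := x₀ + ε • (x₀ - y) with hz
    have hzTT : z ∈ TT d n m v := by
      constructor
      · rw [hz, map_add, map_smul, map_sub, (hsub hx₀F).1, hy.1, sub_self, smul_zero, add_zero]
      · intro j hj
        have heq : pr d (n j) z - v
            = (pr d (n j) x₀ - v) + ε • ((pr d (n j) x₀ - v) - (pr d (n j) y - v)) := by
          rw [hz, map_add, map_smul, map_sub]
          match_scalars <;> ring
        rw [heq]
        have hb : ‖(pr d (n j) x₀ - v) + ε • ((pr d (n j) x₀ - v) - (pr d (n j) y - v))‖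
            ≤ Real.sqrt ((m : ℝ) - j) := by
          refine le_trans (norm_add_le _ _) ?_
          rw [norm_smul, Real.norm_eq_abs, abs_of_pos hε]
          exact hεp j hj
        have hnn : (0:ℝ) ≤ (m : ℝ) - j := by
          have : (j:ℝ) + 1 ≤ m := by exact_mod_cast hj
          linarith
        calc ‖(pr d (n j) x₀ - v) + ε • ((pr d (n j) x₀ - v) - (pr d (n j) y - v))‖ ^ 2
            ≤ Real.sqrt ((m : ℝ) - j) ^ 2 := by
              apply pow_le_pow_left₀ (norm_nonneg _) hb
          _ = (m : ℝ) - j := Real.sq_sqrt hnn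
    have hseg : x₀ ∈ openSegment ℝ y z := by
      refine ⟨ε / (1 + ε), 1 / (1 + ε), by positivity, by positivity, ?_, ?_⟩
      · field_simp
        ring
      · rw [hz]
        match_scalars <;> field_simp <;> ring
    exact hF.2.2 hy hzTT hx₀F hseg
  · -- Case 2 : some constraint is active everywhere on F
    push_neg at hcase
    obtain ⟨j, hjm, hall⟩ := hcase
    obtain ⟨x₀, hx₀F⟩ := hFne
    have hact : ∀ x ∈ F, ‖pr d (n j) x - v‖ ^ 2 = (m : ℝ) - j := fun x hx =>
      le_antisymm ((hsub hx).2 j hjm) (hall x hx)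
    set v' := pr d (n j) x₀ with hv'
    have hv'r : pr d (n j) v' = v' := by rw [hv', pr_comp, max_self]
    have hnjm : n j ≤ n m := hmono hjm.le
    have hprv : pr d (n j) v = v := pr_eq_self_of_le hnjm hv
    have hv'v : pr d (n m) v' = v := by
      rw [hv', pr_comp, max_eq_left hnjm, (hsub hx₀F).1]
    have hnorm : ‖v' - v‖ ^ 2 = (m : ℝ) - j := hact x₀ hx₀F
    -- constancy of pr (n j) on F
    have hconst : ∀ x ∈ F, pr d (n j) x = v' := by
      intro x hx
      have hmid : (1/2 : ℝ) • x + (1/2 : ℝ) • x₀ ∈ F :=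
        hF.1 hx hx₀F (by norm_num) (by norm_num) (by norm_num)
      have ha := hact x hx
      have hb := hact x₀ hx₀F
      have hc := hact _ hmid
      rw [pr_sub_comb n (by norm_num)] at hc
      have := L1 (a := pr d (n j) x - v) (b := pr d (n j) x₀ - v)
        (t := (1/2:ℝ)) (s := (1/2:ℝ)) (r := (m:ℝ) - j)
        (by norm_num) (by norm_num) (by norm_num) (le_of_eq ha) (le_of_eq hb) (le_of_eq hc.symm)
      have h2 : pr d (n j) x - v = pr d (n j) x₀ - v := this
      rw [hv']
      exact sub_left_injective h2
    -- the Pythagoras step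
    have hpyth : ∀ (x : EuclideanSpace ℝ (Fin d)), pr d (n j) x = v' → ∀ j' < j,
        ‖pr d (n j') x - v‖ ^ 2 = ‖pr d (n j') x - v'‖ ^ 2 + ((m:ℝ) - j) := by
      intro x hx j' hj'
      have hnj' : n j' ≤ n j := hmono hj'.le
      have ha : pr d (n j) (pr d (n j') x - v') = 0 := by
        rw [map_sub, pr_comp, max_eq_left hnj', hx, hv'r, sub_self]
      have hb : pr d (n j) (v' - v) = v' - v := by
        rw [map_sub, hv'r, hprv]
      have habs : (pr d (n j') x - v') + (v' - v) = pr d (n j') x - v := by abel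
      have := pyth ha hb
      rw [habs] at this
      rw [this, hnorm]
    have hsub2 : TT d n j v' ⊆ TT d n m v := by
      intro x hx
      have hxj : pr d (n j) x = v' := hx.1
      constructor
      · have : pr d (n m) (pr d (n j) x) = pr d (n m) x := by
          rw [pr_comp, max_eq_left hnjm]
        rw [← this, hxj, hv'v]
      · intro j' hj'
        rcases Nat.lt_or_ge j' j with h | h
        · have := hpyth x hxj j' h
          have h2 := hx.2 j' h
          have hcast : (j:ℝ) - j' + ((m:ℝ) - j) = (m:ℝ) - j' := by ring
          rw [this]
          linarith
        · have hstep : pr d (n j') x = pr d (n j') x₀ := by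
            have e1 : pr d (n j') (pr d (n j) x) = pr d (n j') x := by
              rw [pr_comp, max_eq_left (hmono h)]
            have e2 : pr d (n j') (pr d (n j) x₀) = pr d (n j') x₀ := by
              rw [pr_comp, max_eq_left (hmono h)]
            rw [← e1, hxj, hv', e2]
          rw [hstep]
          exact (hsub hx₀F).2 j' hj'
    have hFsub : F ⊆ TT d n j v' := by
      intro x hx
      have hxj : pr d (n j) x = v' := hconst x hx
      refine ⟨hxj, ?_⟩
      intro j' hj'
      have h1 := hpyth x hxj j' hj'
      have h2 := (hsub hx).2 j' (lt_trans hj' hjm)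
      linarith
    have hface : IsFace (TT d n j v') F :=
      ⟨hF.1, hFsub, fun x1 h1 x2 h2 x hx hseg => hF.2.2 (hsub2 h1) (hsub2 h2) hx hseg⟩
    obtain ⟨m', hm', hdim⟩ := IH j hjm (le_trans hnjm hd) v' F hv'r hface ⟨x₀, hx₀F⟩
    exact ⟨m', le_trans hm' hjm.le, hdim⟩

lemma zero_mem_TT {k : ℕ} (hnk : n k = d) : (0 : EuclideanSpace ℝ (Fin d)) ∈ TT d n k 0 := by
  refine ⟨map_zero _, ?_⟩
  intro j hj
  rw [map_zero, sub_zero, norm_zero]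
  have : (j:ℝ) + 1 ≤ k := by exact_mod_cast hj
  nlinarith

lemma face_exists {k : ℕ} (hmono : Monotone n) (hnk : n k = d)
    (hstrict : ∀ i j, i < j → j ≤ k → n i < n j) (m : ℕ) (hm : m ≤ k) :
    ∃ F, IsFace (TT d n k 0) F ∧ F.Nonempty ∧ sdim F = n m := by
  rcases eq_or_lt_of_le hm with heq | hmk
  · refine ⟨TT d n k 0, ⟨convex_TT n k 0, IsExtreme.refl ℝ _⟩, ⟨0, zero_mem_TT n hnk⟩, ?_⟩
    rw [heq]
    exact sdim_TT n hmono (le_of_eq hnk) (map_zero _)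
  · have hmd : n m < d := hnk ▸ hstrict m k hmk le_rfl
    set i : Fin d := ⟨n m, hmd⟩ with hi
    set v : EuclideanSpace ℝ (Fin d) :=
      Real.sqrt ((k:ℝ) - m) • EuclideanSpace.single i 1 with hvdef
    have hkm : (0:ℝ) ≤ (k:ℝ) - m := by
      have : (m:ℝ) ≤ k := by exact_mod_cast hm
      linarith
    have hvpr : pr d (n m) v = v := by
      rw [hvdef, map_smul, pr_single, if_pos (show n m ≤ (n m) from le_rfl)]
    have hvpr' : ∀ t : ℕ, n m < t → pr d t v = 0 := by
      intro t ht
      rw [hvdef, map_smul, pr_single, if_neg (show ¬ t ≤ (n m) by omega), smul_zero]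
    have hnormv : ‖v‖ ^ 2 = (k:ℝ) - m := by
      rw [hvdef, norm_smul, EuclideanSpace.norm_single, norm_one, mul_one,
        Real.norm_eq_abs, abs_of_nonneg (Real.sqrt_nonneg _), Real.sq_sqrt hkm]
    -- the Pythagoras step for this situation
    have hpyth : ∀ (x : EuclideanSpace ℝ (Fin d)), pr d (n m) x = v → ∀ j < m,
        ‖pr d (n j) x‖ ^ 2 = ‖pr d (n j) x - v‖ ^ 2 + ((k:ℝ) - m) := by
      intro x hx j hj
      have hnj : n j ≤ n m := hmono hj.le
      have ha : pr d (n m) (pr d (n j) x - v) = 0 := by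
        rw [map_sub, pr_comp, max_eq_left hnj, hx, hvpr, sub_self]
      have hb : pr d (n m) v = v := hvpr
      have habs : (pr d (n j) x - v) + v = pr d (n j) x := by abel
      have := pyth ha hb
      rw [habs] at this
      rw [this, hnormv]
    have hsubset : TT d n m v ⊆ TT d n k 0 := by
      intro x hx
      constructor
      · rw [hnk, pr_top le_rfl]
      · intro j hj
        rw [sub_zero]
        rcases lt_trichotomy j m with h | h | h
        · have h1 := hpyth x hx.1 j h
          have h2 := hx.2 j h
          have hcast : (m:ℝ) - j + ((k:ℝ) - m) = (k:ℝ) - j := by ring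
          rw [h1]; linarith
        · subst h
          rw [hx.1, hnormv]
        · have : pr d (n j) x = 0 := by
            have e1 : pr d (n j) (pr d (n m) x) = pr d (n j) x := by
              rw [pr_comp, max_eq_left (hmono h.le)]
            rw [← e1, hx.1, hvpr' (n j) (hstrict m j h hj.le)]
          rw [this, norm_zero]
          have : (j:ℝ) + 1 ≤ k := by exact_mod_cast hj
          nlinarith
    have hmem : ∀ (x : EuclideanSpace ℝ (Fin d)), x ∈ TT d n k 0 → pr d (n m) x = v →
        x ∈ TT d n m v := by
      intro x hxS hxv
      refine ⟨hxv, ?_⟩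
      intro j hj
      have h1 := hpyth x hxv j hj
      have h2 := hxS.2 j (lt_trans hj hmk)
      rw [sub_zero] at h2
      linarith
    have hextreme : IsExtreme ℝ (TT d n k 0) (TT d n m v) := by
      refine ⟨hsubset, ?_⟩
      intro x1 h1 x2 h2 x hx hseg
      obtain ⟨a, b, ha, hb, hab, habx⟩ := hseg
      have hA : ‖pr d (n m) x1‖ ^ 2 ≤ (k:ℝ) - m := by
        have := h1.2 m hmk; rwa [sub_zero] at this
      have hB : ‖pr d (n m) x2‖ ^ 2 ≤ (k:ℝ) - m := by
        have := h2.2 m hmk; rwa [sub_zero] at this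
      have hcomb : a • pr d (n m) x1 + b • pr d (n m) x2 = v := by
        rw [← map_smul, ← map_smul, ← map_add, habx, hx.1]
      have hr : ((k:ℝ) - m) ≤ ‖a • pr d (n m) x1 + b • pr d (n m) x2‖ ^ 2 := by
        rw [hcomb, hnormv]
      have heq := L1 ha hb hab hA hB hr
      have hx1v : pr d (n m) x1 = v := by
        rw [← hcomb, heq, ← add_smul, hab, one_smul]
      have hx2v : pr d (n m) x2 = v := by rw [← heq, hx1v]
      exact hmem x1 h1 hx1v
    refine ⟨TT d n m v, ⟨convex_TT n m v, hextreme⟩, ?_, ?_⟩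
    · refine ⟨v, ?_⟩
      have := mem_TT_of n hmono hvpr (map_zero _) (by simp)
      simpa using this
    · exact sdim_TT n hmono (le_trans (hmono hm) (le_of_eq hnk)) hvpr

lemma quadrep_TT {k : ℕ} (hnk : n k = d) : QuadRep (TT d n k 0) k := by
  refine ⟨fun j => pr d (n j.val), fun _ => 0, fun j => (j : ℝ) - k, ?_, ?_, ?_⟩
  · intro j x
    rw [inner_pr_self]
    positivity
  · intro j x y
    exact inner_pr_symm x y
  · ext x
    simp only [TT, mem_setOf_eq, inner_zero_left, mul_zero, add_zero, sub_zero]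
    constructor
    · intro hx j
      have h1 := hx.2 j.val j.isLt
      rw [inner_pr_self]
      linarith
    · intro hx
      refine ⟨by rw [hnk]; exact pr_top le_rfl x, ?_⟩
      intro j hj
      have h1 := hx ⟨j, hj⟩
      rw [inner_pr_self] at h1
      simp only at h1
      linarith

lemma compact_TT {k : ℕ} (hnk : n k = d) (h0 : n 0 = 0) : IsCompact (TT d n k 0) := by
  rcases Nat.eq_zero_or_pos k with hk | hk
  · have hd0 : d = 0 := by rw [← hnk, hk, h0]
    subst hd0
    haveI : Unique (EuclideanSpace ℝ (Fin 0)) := by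
      refine ⟨⟨0⟩, ?_⟩
      intro a
      ext i
      exact absurd i.isLt (by omega)
    exact (Set.toFinite _).isCompact
  · apply IsCompact.of_isClosed_subset (isCompact_closedBall (0 : EuclideanSpace ℝ (Fin d))
      (Real.sqrt k)) (isClosed_TT n k 0)
    intro x hx
    have h1 := hx.2 0 hk
    rw [h0, pr_zero, sub_zero] at h1
    rw [mem_closedBall_zero_iff]
    have hsq : Real.sqrt (k:ℝ) ^ 2 = (k:ℝ) := Real.sq_sqrt (by positivity)
    nlinarith [norm_nonneg x, Real.sqrt_nonneg (k:ℝ)]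


theorem everything_is_possible (I : Finset ℕ) (hI : I.Nonempty) :
    ∃ S : Set (EuclideanSpace ℝ (Fin (I.max' hI))),
      IsClosed S ∧ Convex ℝ S ∧ faceDimSig S = ↑I ∧
      QuadRep S (I.card - 1) ∧ (0 ∈ I → IsCompact S) := by
  classical
  set d := I.max' hI with hd
  set k := I.card - 1 with hk
  have hc : 0 < I.card := Finset.card_pos.2 hI
  have hkc : ∀ j : ℕ, min j k < I.card := fun j => by omega
  set iso := I.orderIsoOfFin rfl with hiso
  set n : ℕ → ℕ := fun j => (iso ⟨min j k, hkc j⟩ : ℕ) with hn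
  have hmemI : ∀ j : ℕ, n j ∈ I := fun j => (iso ⟨min j k, hkc j⟩).2
  have hmono : Monotone n := by
    intro a b hab
    have h1 : (⟨min a k, hkc a⟩ : Fin I.card) ≤ ⟨min b k, hkc b⟩ := by
      rw [Fin.le_def]; simp only; omega
    exact Subtype.coe_le_coe.2 (iso.monotone h1)
  have hstrict : ∀ i j, i < j → j ≤ k → n i < n j := by
    intro i j hij hjk
    have h1 : (⟨min i k, hkc i⟩ : Fin I.card) < ⟨min j k, hkc j⟩ := by
      rw [Fin.lt_def]; simp only; omega
    exact Subtype.coe_lt_coe.2 (iso.strictMono h1)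
  have hsurj : ∀ a ∈ I, ∃ m ≤ k, n m = a := by
    intro a ha
    set jj := iso.symm ⟨a, ha⟩ with hjj
    have hjk : (jj : ℕ) ≤ k := by have := jj.isLt; omega
    refine ⟨jj.val, hjk, ?_⟩
    have h1 : (⟨min jj.val k, hkc jj.val⟩ : Fin I.card) = jj := by
      apply Fin.ext; simp only; omega
    rw [hn]
    simp only [h1]
    simp only [hjj, OrderIso.apply_symm_apply]
  have hnk : n k = d := by
    apply le_antisymm
    · exact Finset.le_max' I (n k) (hmemI k)
    · obtain ⟨m, hm, hnm⟩ := hsurj d (I.max'_mem hI)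
      rw [← hnm]
      exact hmono (by omega)
  have h0 : 0 ∈ I → n 0 = 0 := by
    intro ha
    obtain ⟨m, hm, hnm⟩ := hsurj 0 ha
    have := hmono (Nat.zero_le m)
    omega
  refine ⟨TT d n k 0, isClosed_TT n k 0, convex_TT n k 0, ?_, quadrep_TT n hnk,
    fun h0I => compact_TT n hnk (h0 h0I)⟩
  ext a
  simp only [faceDimSig, mem_setOf_eq, Finset.coe_insert, Finset.mem_coe]
  constructor
  · rintro ⟨F, hF, hne, hdim⟩
    obtain ⟨m', _, hdim'⟩ := face_classify n hmono k (le_of_eq hnk) 0 F (map_zero _) hF hne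
    rw [← hdim, hdim']
    exact hmemI m'
  · intro ha
    obtain ⟨m, hm, hnm⟩ := hsurj a ha
    obtain ⟨F, hF, hne, hdim⟩ := face_exists n hmono hnk hstrict m hm
    exact ⟨F, hF, hne, by rw [hdim, hnm]⟩
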